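/- arXiv:quant-ph/0602084 — 2 statements merged into one kernel-verified Lean document; each statement's English description precedes it below -/
import Mathlib

section
/- Let |ψ_i⟩ (1 ≤ i ≤ I) and |φ⟩ be unit vectors in a finite-dimensional complex Hilbert space, and 0 ≤ λ_i ≤ 1 with ‖Σ_i λ_i |ψ_i⟩⟨ψ_i| - |φ⟩⟨φ|‖_1 ≤ ε, where ε < 1/2. Then there exists i₀ such that √(1 - |⟨φ|ψ_{i₀}⟩|²) ≤ √(2ε). -/
/-- The rank-one projection `|φ⟩⟨φ|` as a matrix: entries `φ i * conj (φ j)`. -/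
noncomputable def proj {d : ℕ} (φ : EuclideanSpace ℂ (Fin d)) : Matrix (Fin d) (Fin d) ℂ :=
  Matrix.vecMulVec (fun i => φ i) (fun j => star (φ j))

/-- The trace norm (sum of singular values, i.e. square roots of the eigenvalues of `AᴴA`). -/
noncomputable def traceNorm {d : ℕ} (A : Matrix (Fin d) (Fin d) ℂ) : ℝ :=
  ∑ i, Real.sqrt ((Matrix.isHermitian_conjTranspose_mul_self A).eigenvalues i)

/-- The operator (`∞`-)norm of a matrix acting on `ℓ²`. -/
noncomputable def opNorm {d : ℕ} (A : Matrix (Fin d) (Fin d) ℂ) : ℝ :=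
  ‖Matrix.toEuclideanCLM (𝕜 := ℂ) A‖

open Matrix in
/-- Trace duality bound: `‖tr (X M)‖ ≤ ‖X‖_∞ ⬝ ‖M‖₁` (for `‖X‖_∞ ≤ 1`). -/
lemma traceMulNormLeAux {d : ℕ} (M X : Matrix (Fin d) (Fin d) ℂ) (hX : opNorm X ≤ 1) :
    ‖(X * M).trace‖ ≤ traceNorm M := by
  set hH := Matrix.isHermitian_conjTranspose_mul_self M with hHdef
  set b := hH.eigenvectorBasis with hb
  set U := (Matrix.IsHermitian.eigenvectorUnitary hH : Matrix (Fin d) (Fin d) ℂ) with hU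
  have hUU : U * star U = 1 :=
    Matrix.mem_unitaryGroup_iff.mp (Matrix.IsHermitian.eigenvectorUnitary hH).2
  have key : ∀ (C : Matrix (Fin d) (Fin d) ℂ),
      C.trace = ∑ i, star (⇑(b i)) ⬝ᵥ (C *ᵥ ⇑(b i)) := by
    intro C
    have h1 : (star U * (C * U)).trace = C.trace := by
      rw [Matrix.trace_mul_comm, mul_assoc, hUU, mul_one]
    rw [← h1, Matrix.trace]
    apply Finset.sum_congr rfl
    intro i _
    simp only [Matrix.diag_apply, Matrix.mul_apply, Matrix.star_apply, dotProduct,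
      Matrix.mulVec, Pi.star_apply, hU, Matrix.IsHermitian.eigenvectorUnitary_apply,
      Finset.sum_mul, Finset.mul_sum]
    try rw [Finset.sum_comm]
  have hterm : ∀ i, ‖star (⇑(b i)) ⬝ᵥ ((X * M) *ᵥ ⇑(b i))‖ ≤ Real.sqrt (hH.eigenvalues i) := by
    intro i
    have hv : ‖b i‖ = 1 := b.orthonormal.1 i
    set w : EuclideanSpace ℂ (Fin d) := (WithLp.equiv 2 _).symm (M *ᵥ ⇑(b i)) with hw
    have hw2 : (inner ℂ w w : ℂ) = ((hH.eigenvalues i : ℝ) : ℂ) := by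
      rw [hw, WithLp.equiv_symm_apply, EuclideanSpace.inner_toLp_toLp, dotProduct_comm, Matrix.star_mulVec,
        ← dotProduct_mulVec, Matrix.mulVec_mulVec,
        Matrix.IsHermitian.mulVec_eigenvectorBasis]
      have h2 : star (⇑(b i)) ⬝ᵥ (⇑(b i)) = (1 : ℂ) := by
        have := inner_self_eq_norm_sq_to_K (𝕜 := ℂ) (b i)
        rw [EuclideanSpace.inner_eq_star_dotProduct, dotProduct_comm] at this
        simpa [hv] using this
      simp only [dotProduct, Pi.smul_apply, Complex.real_smul, mul_left_comm]
      simp only [dotProduct] at h2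
      rw [← Finset.mul_sum, h2, mul_one]
    have hwn : ‖w‖ = Real.sqrt (hH.eigenvalues i) := by
      have h4 : ‖w‖^2 = hH.eigenvalues i := by
        have h3 := hw2
        rw [inner_self_eq_norm_sq_to_K] at h3
        rw [← RCLike.ofReal_pow] at h3
        exact RCLike.ofReal_inj.mp h3
      rw [← h4, Real.sqrt_sq (norm_nonneg w)]
    have hrw : star (⇑(b i)) ⬝ᵥ ((X * M) *ᵥ ⇑(b i))
        = (inner ℂ (b i) ((Matrix.toEuclideanCLM (𝕜 := ℂ) X) w) : ℂ) := by
      rw [hw, WithLp.equiv_symm_apply, Matrix.toEuclideanCLM_toLp, ← Matrix.mulVec_mulVec]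
      rw [dotProduct_comm]; rfl
    rw [hrw]
    calc ‖(inner ℂ (b i) ((Matrix.toEuclideanCLM (𝕜 := ℂ) X) w) : ℂ)‖
        ≤ ‖b i‖ * ‖(Matrix.toEuclideanCLM (𝕜 := ℂ) X) w‖ := norm_inner_le_norm _ _
      _ ≤ 1 * (‖Matrix.toEuclideanCLM (𝕜 := ℂ) X‖ * ‖w‖) := by
          rw [hv, one_mul, one_mul]; exact ContinuousLinearMap.le_opNorm _ _
      _ ≤ 1 * (1 * Real.sqrt (hH.eigenvalues i)) := by
          rw [hwn]
          gcongr
          exact hX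
      _ = Real.sqrt (hH.eigenvalues i) := by ring
  calc ‖(X * M).trace‖ = ‖∑ i, star (⇑(b i)) ⬝ᵥ ((X * M) *ᵥ ⇑(b i))‖ := by rw [key]
    _ ≤ ∑ i, ‖star (⇑(b i)) ⬝ᵥ ((X * M) *ᵥ ⇑(b i))‖ := norm_sum_le _ _
    _ ≤ ∑ i, Real.sqrt (hH.eigenvalues i) := Finset.sum_le_sum fun i _ => hterm i
    _ = traceNorm M := rfl

lemma traceProjAux {d : ℕ} (v : EuclideanSpace ℂ (Fin d)) :
    (proj v).trace = ((‖v‖ : ℂ))^2 := by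
  have h := inner_self_eq_norm_sq_to_K (𝕜 := ℂ) v
  rw [EuclideanSpace.inner_eq_star_dotProduct] at h
  have h2 : (proj v).trace
      = dotProduct (star ((WithLp.equiv 2 (Fin d → ℂ)) v)) ((WithLp.equiv 2 (Fin d → ℂ)) v) := by
    simp [proj, Matrix.trace, Matrix.diag, Matrix.vecMulVec_apply, dotProduct, mul_comm]
  rw [h2, dotProduct_comm]; exact h

lemma traceProjMulAux {d : ℕ} (a b : EuclideanSpace ℂ (Fin d)) :
    (proj a * proj b).trace = ((‖(inner ℂ a b : ℂ)‖ : ℂ))^2 := by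
  have h : (proj a * proj b).trace = (inner ℂ a b : ℂ) * (inner ℂ b a : ℂ) := by
    rw [EuclideanSpace.inner_eq_star_dotProduct, EuclideanSpace.inner_eq_star_dotProduct]
    simp only [Matrix.trace, Matrix.diag_apply, Matrix.mul_apply, proj,
      Matrix.vecMulVec_apply, dotProduct, Finset.sum_mul, Finset.mul_sum]
    exact Finset.sum_congr rfl fun j _ => Finset.sum_congr rfl fun k _ => by
      simp [Pi.star_apply]; ring
  rw [h, ← inner_conj_symm b a, Complex.mul_conj']

lemma opNormProjAux {d : ℕ} (φ : EuclideanSpace ℂ (Fin d)) (hφ : ‖φ‖ = 1) :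
    opNorm (proj φ) ≤ 1 := by
  unfold opNorm
  refine ContinuousLinearMap.opNorm_le_bound _ zero_le_one fun y => ?_
  have hy : (Matrix.toEuclideanCLM (𝕜 := ℂ) (proj φ)) y = (inner ℂ φ y : ℂ) • φ := by
    apply (WithLp.equiv 2 (Fin d → ℂ)).injective
    change ((Matrix.toEuclideanCLM (𝕜 := ℂ) (proj φ)) y).ofLp = (inner ℂ φ y • φ).ofLp
    rw [Matrix.ofLp_toEuclideanCLM]
    funext i
    simp only [proj, Matrix.mulVec, Matrix.vecMulVec_apply, dotProduct,
      EuclideanSpace.inner_eq_star_dotProduct, Pi.star_apply, WithLp.ofLp_smul,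
      Pi.smul_apply, smul_eq_mul]
    rw [Finset.sum_mul]
    refine Finset.sum_congr rfl fun j _ => ?_
    ring
  rw [hy, norm_smul, hφ, mul_one, one_mul]
  exact norm_inner_le_norm φ y |>.trans (by rw [hφ, one_mul])

/-- Lemma 2 of the paper: if `0 ≤ λᵢ ≤ 1` and
`‖Σᵢ λᵢ|ψᵢ⟩⟨ψᵢ| - |φ⟩⟨φ|‖₁ ≤ ε < 1/2`, then some `i₀` satisfies
`√(1 - |⟨φ|ψ_{i₀}⟩|²) ≤ √(2ε)`. -/
theorem stmt8 {d I : ℕ} (ψ : Fin I → EuclideanSpace ℂ (Fin d)) (hψ : ∀ i, ‖ψ i‖ = 1)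
    (φ : EuclideanSpace ℂ (Fin d)) (hφ : ‖φ‖ = 1) (lam : Fin I → ℝ)
    (h0 : ∀ i, 0 ≤ lam i) (h1 : ∀ i, lam i ≤ 1) {ε : ℝ} (hε : ε < 1 / 2)
    (h : traceNorm (∑ i, (lam i : ℂ) • proj (ψ i) - proj φ) ≤ ε) :
    ∃ i₀, Real.sqrt (1 - ‖(inner ℂ φ (ψ i₀) : ℂ)‖ ^ 2) ≤ Real.sqrt (2 * ε) := by
  classical
  set M := ∑ i, (lam i : ℂ) • proj (ψ i) - proj φ with hM
  have hε0 : 0 ≤ ε :=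
    le_trans (Finset.sum_nonneg fun i _ => Real.sqrt_nonneg _) h
  set x : Fin I → ℝ := fun i => ‖(inner ℂ φ (ψ i) : ℂ)‖ ^ 2 with hx
  have hxnn : ∀ i, 0 ≤ x i := fun i => sq_nonneg _
  -- trace of M
  have htrM : M.trace = ((∑ i, lam i : ℝ) : ℂ) - 1 := by
    rw [hM, Matrix.trace_sub, Matrix.trace_sum]
    simp [Matrix.trace_smul, traceProjAux, hψ, hφ]
  -- trace of proj φ * M
  have htrPM : (proj φ * M).trace = ((∑ i, lam i * x i : ℝ) : ℂ) - 1 := by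
    rw [hM, Matrix.mul_sub, Matrix.mul_sum, Matrix.trace_sub, Matrix.trace_sum]
    have hself : (inner ℂ φ φ : ℂ) = 1 := by
      rw [inner_self_eq_norm_sq_to_K, hφ]; norm_num
    simp only [Matrix.mul_smul, Matrix.trace_smul, traceProjMulAux, smul_eq_mul, hself,
      norm_one, Complex.ofReal_one, one_pow, hx]
    push_cast
    ring
  -- bound |tr M|
  have hop1 : opNorm (1 : Matrix (Fin d) (Fin d) ℂ) ≤ 1 := by
    unfold opNorm
    rw [map_one]
    exact ContinuousLinearMap.norm_id_le
  have hL : (∑ i, lam i) ≤ 1 + ε := by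
    have hb := traceMulNormLeAux M 1 hop1
    rw [one_mul, htrM] at hb
    have : |(∑ i, lam i) - 1| ≤ ε := by
      have : ((∑ i, lam i : ℝ) : ℂ) - 1 = (((∑ i, lam i) - 1 : ℝ) : ℂ) := by push_cast; ring
      rw [this, Complex.norm_real] at hb
      exact le_trans (le_of_eq rfl) (hb.trans h)
    have := abs_le.mp this
    linarith [this.2]
  -- bound |tr (proj φ * M)|
  have hS : 1 - ε ≤ ∑ i, lam i * x i := by
    have hb := traceMulNormLeAux M (proj φ) (opNormProjAux φ hφ)
    rw [htrPM] at hb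
    have : |(∑ i, lam i * x i) - 1| ≤ ε := by
      have heq : ((∑ i, lam i * x i : ℝ) : ℂ) - 1 = (((∑ i, lam i * x i) - 1 : ℝ) : ℂ) := by
        push_cast; ring
      rw [heq, Complex.norm_real] at hb
      exact hb.trans h
    have := abs_le.mp this
    linarith [this.1]
  -- main claim
  have hclaim : ∃ i₀, 1 - x i₀ ≤ 2 * ε := by
    by_contra hc
    push_neg at hc
    have hxlt : ∀ i, x i < 1 - 2 * ε := fun i => by have := hc i; linarith
    have hS2 : (∑ i, lam i * x i) ≤ (1 - 2 * ε) * ∑ i, lam i := by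
      rw [Finset.mul_sum]
      exact Finset.sum_le_sum fun i _ => by
        rw [mul_comm (1 - 2 * ε) (lam i)]
        exact mul_le_mul_of_nonneg_left (le_of_lt (hxlt i)) (h0 i)
    have h12 : (1 - 2 * ε) * (∑ i, lam i) ≤ (1 - 2 * ε) * (1 + ε) :=
      mul_le_mul_of_nonneg_left hL (by linarith)
    have hε2 : ε = 0 := by nlinarith
    rw [hε2] at hS hxlt
    have hL1 : (∑ i, lam i) ≤ 1 := by rw [hε2] at hL; linarith
    have hSpos : (0 : ℝ) < ∑ i, lam i * x i := by linarith
    obtain ⟨j, _, hj⟩ := Finset.exists_lt_of_sum_lt (by simpa using hSpos :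
      (∑ i : Fin I, (0 : ℝ)) < ∑ i, lam i * x i)
    have hlamj : 0 < lam j := by
      rcases lt_or_eq_of_le (h0 j) with h' | h'
      · exact h'
      · exfalso; rw [← h'] at hj; simp at hj
    have hstrict : (∑ i, lam i * x i) < ∑ i, lam i := by
      apply Finset.sum_lt_sum (fun i _ => mul_le_of_le_one_right (h0 i) (by linarith [hxlt i]))
      exact ⟨j, Finset.mem_univ j, by nlinarith [hxlt j]⟩
    linarith
  obtain ⟨i₀, hi₀⟩ := hclaim
  exact ⟨i₀, Real.sqrt_le_sqrt hi₀⟩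
end

section
/- Let ρ = Σ_i λ_i |ψ_i⟩⟨ψ_i| with λ_i ≥ 0 (vectors ψ_i unit but not necessarily orthogonal), and let φ be a unit vector with ‖ρ - |φ⟩⟨φ|‖_1 ≤ dδ. Then, assuming dδ < 1/2, there exists i₀ with |⟨φ|ψ_{i₀}⟩|² ≥ 1 - 2dδ, i.e. D(φ, ψ_{i₀}) ≤ √(2dδ). -/
open Polynomial Matrix

section Aux

lemma aux_charpoly_diag {n : Type*} [Fintype n] [DecidableEq n] (f : n → ℂ) :
    (Matrix.diagonal f).charpoly = ∏ i, (X - C (f i)) := by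
  have : charmatrix (Matrix.diagonal f) = Matrix.diagonal (fun i => (X : ℂ[X]) - C (f i)) := by
    ext i j
    by_cases h : i = j
    · subst h; simp
    · simp [h, Matrix.diagonal_apply_ne _ h]
  rw [Matrix.charpoly, this, Matrix.det_diagonal]

lemma aux_charpoly_unitary_conj {n : Type*} [Fintype n] [DecidableEq n]
    (U : Matrix.unitaryGroup n ℂ) (M : Matrix n n ℂ) :
    ((U : Matrix n n ℂ) * M * star (U : Matrix n n ℂ)).charpoly = M.charpoly := by
  have hUU : (U : Matrix n n ℂ) * star (U : Matrix n n ℂ) = 1 :=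
    Matrix.mem_unitaryGroup_iff.mp U.2
  have hUU' : star (U : Matrix n n ℂ) * (U : Matrix n n ℂ) = 1 :=
    Matrix.mem_unitaryGroup_iff'.mp U.2
  have hmap : ((U : Matrix n n ℂ).map C) * ((star (U : Matrix n n ℂ)).map C) = 1 := by
    rw [← Matrix.map_mul, hUU]; simp
  have hmap' : ((star (U : Matrix n n ℂ)).map C) * ((U : Matrix n n ℂ).map C) = 1 := by
    rw [← Matrix.map_mul, hUU']; simp
  have hc : ∀ (B : Matrix n n ℂ[X]), (Matrix.scalar n) (X : ℂ[X]) * B = B * (Matrix.scalar n) X :=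
    fun B => (Matrix.scalar_commute (X : ℂ[X]) (fun r => Commute.all _ r) B).eq
  have hchar : charmatrix ((U : Matrix n n ℂ) * M * star (U : Matrix n n ℂ))
      = ((U : Matrix n n ℂ).map C) * charmatrix M * ((star (U : Matrix n n ℂ)).map C) := by
    rw [charmatrix, charmatrix, mul_sub, sub_mul]
    congr 1
    · rw [mul_assoc, hc, ← mul_assoc, hmap, one_mul]
    · simp [RingHom.mapMatrix_apply, Matrix.map_mul]
  rw [Matrix.charpoly, Matrix.charpoly, hchar, Matrix.det_mul, Matrix.det_mul,
    mul_comm, ← mul_assoc, ← Matrix.det_mul, hmap']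
  simp

lemma aux_herm_charpoly {n : Type*} [Fintype n] [DecidableEq n] {A : Matrix n n ℂ}
    (hA : A.IsHermitian) : A.charpoly = ∏ i, (X - C ((hA.eigenvalues i : ℝ) : ℂ)) := by
  conv_lhs => rw [hA.spectral_theorem, Unitary.conjStarAlgAut_apply]
  rw [aux_charpoly_unitary_conj, aux_charpoly_diag]
  rfl

lemma aux_sum_g_eigenvalues {n : Type*} [Fintype n] [DecidableEq n] {A : Matrix n n ℂ}
    (hA : A.IsHermitian) (w : n → ℝ)
    (hch : A.charpoly = ∏ i, (X - C ((w i : ℝ) : ℂ))) (g : ℝ → ℝ) :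
    ∑ i, g (hA.eigenvalues i) = ∑ i, g (w i) := by
  have h1 : (Finset.univ.val.map (fun i => ((hA.eigenvalues i : ℝ) : ℂ)))
      = (Finset.univ.val.map (fun i => ((w i : ℝ) : ℂ))) := by
    have e1 : ((Finset.univ.val.map (fun i => ((hA.eigenvalues i : ℝ) : ℂ))).map
        (fun a => X - C a)).prod = A.charpoly := by
      rw [Multiset.map_map, aux_herm_charpoly hA]; rfl
    have e2 : ((Finset.univ.val.map (fun i => ((w i : ℝ) : ℂ))).map
        (fun a => X - C a)).prod = A.charpoly := by
      rw [Multiset.map_map, hch]; rfl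
    rw [← roots_multiset_prod_X_sub_C (Finset.univ.val.map (fun i => ((hA.eigenvalues i:ℝ):ℂ))),
      ← roots_multiset_prod_X_sub_C (Finset.univ.val.map (fun i => ((w i:ℝ):ℂ))), e1, e2]
  have h2 := congrArg (fun m : Multiset ℂ => (m.map (fun z => g z.re)).sum) h1
  simpa [Multiset.map_map, Function.comp] using h2

lemma aux_trace_herm {d : ℕ} {A : Matrix (Fin d) (Fin d) ℂ} (hA : A.IsHermitian) :
    A.trace = ∑ i, ((hA.eigenvalues i : ℝ) : ℂ) := by
  conv_lhs => rw [hA.spectral_theorem, Unitary.conjStarAlgAut_apply]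
  rw [Matrix.trace_mul_comm, ← mul_assoc, Unitary.coe_star_mul_self, one_mul,
    Matrix.trace_diagonal]
  rfl

lemma aux_quad_eq {d : ℕ} {A : Matrix (Fin d) (Fin d) ℂ} (hA : A.IsHermitian)
    (φ : Fin d → ℂ) (hφ : star φ ⬝ᵥ φ = 1) :
    ∃ n : Fin d → ℝ, (∀ i, 0 ≤ n i) ∧ (∑ i, n i = 1) ∧
      (star φ ⬝ᵥ (A *ᵥ φ)).re = ∑ i, hA.eigenvalues i * n i := by
  set V : Matrix (Fin d) (Fin d) ℂ := (hA.eigenvectorUnitary : Matrix (Fin d) (Fin d) ℂ) with hV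
  have hVV : V * star V = 1 := Matrix.mem_unitaryGroup_iff.mp hA.eigenvectorUnitary.2
  set c : Fin d → ℂ := (star V) *ᵥ φ with hc
  have hstarc : star c = star φ ᵥ* V := by
    rw [hc, Matrix.star_mulVec, Matrix.star_eq_conjTranspose, Matrix.conjTranspose_conjTranspose]
  refine ⟨fun i => Complex.normSq (c i), fun i => Complex.normSq_nonneg _, ?_, ?_⟩
  · have h2 : star c ⬝ᵥ c = 1 := by
      rw [hstarc, hc, ← Matrix.dotProduct_mulVec, Matrix.mulVec_mulVec, hVV, Matrix.one_mulVec, hφ]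
    have h3 : star c ⬝ᵥ c = ((∑ i, Complex.normSq (c i) : ℝ) : ℂ) := by
      push_cast
      simp [dotProduct, Complex.normSq_eq_conj_mul_self]
    rw [h3] at h2
    exact_mod_cast h2
  · have h1 : star φ ⬝ᵥ (A *ᵥ φ) = ∑ i, ((hA.eigenvalues i : ℂ)) * Complex.normSq (c i) := by
      conv_lhs => rw [hA.spectral_theorem, Unitary.conjStarAlgAut_apply]
      rw [← Matrix.mulVec_mulVec, ← Matrix.mulVec_mulVec, Matrix.dotProduct_mulVec, ← hstarc]
      simp only [dotProduct, Matrix.mulVec_diagonal, Pi.star_apply]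
      congr 1
      funext i
      rw [Complex.normSq_eq_conj_mul_self, ← hc, Complex.star_def, Function.comp_apply]
      rw [mul_left_comm]
      rfl
    rw [h1]
    push_cast
    simp

lemma aux_dot_sum {m : ℕ} {ι : Type*} (v : Fin m → ℂ) (s : Finset ι) (f : ι → Fin m → ℂ) :
    v ⬝ᵥ (∑ i ∈ s, f i) = ∑ i ∈ s, v ⬝ᵥ f i :=
  map_sum (AddMonoidHom.mk' (fun u => v ⬝ᵥ u) (fun a b => dotProduct_add v a b)) f s

lemma aux_sum_mulVec {m : ℕ} {ι : Type*} (s : Finset ι) (M : ι → Matrix (Fin m) (Fin m) ℂ)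
    (v : Fin m → ℂ) : (∑ i ∈ s, M i) *ᵥ v = ∑ i ∈ s, (M i) *ᵥ v :=
  map_sum (AddMonoidHom.mk' (fun B : Matrix (Fin m) (Fin m) ℂ => B *ᵥ v)
    (fun A B => Matrix.add_mulVec A B v)) M s

end Aux

lemma aux_traceNorm_herm {d : ℕ} {A : Matrix (Fin d) (Fin d) ℂ} (hA : A.IsHermitian) :
    traceNorm A = ∑ i, |hA.eigenvalues i| := by
  have hB : Aᴴ * A = (hA.eigenvectorUnitary : Matrix (Fin d) (Fin d) ℂ)
      * Matrix.diagonal (fun i => ((hA.eigenvalues i ^ 2 : ℝ) : ℂ))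
      * star (hA.eigenvectorUnitary : Matrix (Fin d) (Fin d) ℂ) := by
    rw [hA.eq]
    conv_lhs => rw [hA.spectral_theorem, Unitary.conjStarAlgAut_apply]
    simp only [mul_assoc]
    rw [← mul_assoc (star (hA.eigenvectorUnitary : Matrix (Fin d) (Fin d) ℂ))
        (hA.eigenvectorUnitary : Matrix (Fin d) (Fin d) ℂ),
      Unitary.coe_star_mul_self, one_mul,
      ← mul_assoc (Matrix.diagonal _) (Matrix.diagonal _), Matrix.diagonal_mul_diagonal]
    congr 2
    funext i
    simp [Function.comp]
    ring_nf
  have hch : (Aᴴ * A).charpoly = ∏ i, (X - C ((hA.eigenvalues i ^ 2 : ℝ) : ℂ)) := by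
    rw [hB, aux_charpoly_unitary_conj, aux_charpoly_diag]
  have := aux_sum_g_eigenvalues (Matrix.isHermitian_conjTranspose_mul_self A)
    (fun i => hA.eigenvalues i ^ 2) hch Real.sqrt
  rw [traceNorm, this]
  congr 1
  funext i
  rw [Real.sqrt_sq_eq_abs]

lemma aux_inner_dot {d : ℕ} (x y : EuclideanSpace ℂ (Fin d)) :
    (inner ℂ x y : ℂ) = star (fun i => x i) ⬝ᵥ (fun i => y i) := by
  simp [dotProduct, PiLp.inner_apply, RCLike.inner_apply, mul_comm]

lemma aux_proj_herm {d : ℕ} (φ : EuclideanSpace ℂ (Fin d)) : (proj φ).IsHermitian := by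
  ext i j
  simp [proj, Matrix.conjTranspose_apply, Matrix.vecMulVec_apply, mul_comm]

lemma aux_trace_proj {d : ℕ} (φ : EuclideanSpace ℂ (Fin d)) :
    (proj φ).trace = (inner ℂ φ φ : ℂ) := by
  rw [aux_inner_dot]
  simp [proj, Matrix.trace, Matrix.diag, Matrix.vecMulVec_apply, dotProduct, mul_comm]

lemma aux_quad_proj {d : ℕ} (ψ φ : EuclideanSpace ℂ (Fin d)) :
    star (fun i => φ i) ⬝ᵥ ((proj ψ) *ᵥ (fun i => φ i)) =
      ((‖(inner ℂ φ ψ : ℂ)‖ ^ 2 : ℝ) : ℂ) := by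
  have : (proj ψ) *ᵥ (fun i => φ i) = fun i => ψ i * (star (fun j => ψ j) ⬝ᵥ (fun j => φ j)) := by
    funext i
    simp [proj, Matrix.mulVec, Matrix.vecMulVec_apply, dotProduct, Finset.mul_sum,
      mul_assoc]
  rw [this]
  have h1 : star (fun i => φ i) ⬝ᵥ (fun i => ψ i * (star (fun j => ψ j) ⬝ᵥ (fun j => φ j)))
      = (star (fun i => φ i) ⬝ᵥ fun i => ψ i) * (star (fun j => ψ j) ⬝ᵥ (fun j => φ j)) := by
    simp [dotProduct, Finset.sum_mul, mul_assoc]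
  rw [h1, ← aux_inner_dot, ← aux_inner_dot, ← inner_conj_symm ψ φ, Complex.mul_conj]
  simp [Complex.normSq_eq_norm_sq]

/-- If `ρ = Σᵢ λᵢ|ψᵢ⟩⟨ψᵢ|` with `λᵢ ≥ 0`, `φ` is a unit vector with
`‖ρ - |φ⟩⟨φ|‖₁ ≤ dδ` and `dδ < 1/2`, then some `i₀` satisfies
`|⟨φ|ψ_{i₀}⟩|² ≥ 1 - 2dδ`, i.e. `D(φ, ψ_{i₀}) ≤ √(2dδ)`. -/
theorem stmt18 {dim I : ℕ} (d : ℕ) {δ : ℝ} (hδ : 0 ≤ δ) (hdδ : (d : ℝ) * δ < 1 / 2)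
    (lam : Fin I → ℝ) (h0 : ∀ i, 0 ≤ lam i)
    (ψ : Fin I → EuclideanSpace ℂ (Fin dim)) (hψ : ∀ i, ‖ψ i‖ = 1)
    (φ : EuclideanSpace ℂ (Fin dim)) (hφ : ‖φ‖ = 1)
    (h : traceNorm (∑ i, (lam i : ℂ) • proj (ψ i) - proj φ) ≤ (d : ℝ) * δ) :
    ∃ i₀, 1 - 2 * d * δ ≤ ‖(inner ℂ φ (ψ i₀) : ℂ)‖ ^ 2 ∧
      Real.sqrt (1 - ‖(inner ℂ φ (ψ i₀) : ℂ)‖ ^ 2) ≤ Real.sqrt (2 * d * δ) := by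
  set t : ℝ := (d : ℝ) * δ with ht
  have ht0 : 0 ≤ t := mul_nonneg (Nat.cast_nonneg d) hδ
  set A : Matrix (Fin dim) (Fin dim) ℂ := ∑ i, (lam i : ℂ) • proj (ψ i) - proj φ with hAdef
  have hA : A.IsHermitian := by
    show Aᴴ = A
    rw [hAdef]
    rw [Matrix.conjTranspose_sub, Matrix.conjTranspose_sum, (aux_proj_herm φ).eq]
    congr 1
    refine Finset.sum_congr rfl (fun i _ => ?_)
    rw [Matrix.conjTranspose_smul, (aux_proj_herm (ψ i)).eq, Complex.star_def,
      Complex.conj_ofReal]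
  set μ : Fin dim → ℝ := hA.eigenvalues with hμ
  have hS : ∑ i, |μ i| ≤ t := le_trans (le_of_eq (aux_traceNorm_herm hA).symm) h
  -- inner products of unit vectors
  have hinner1 : (inner ℂ φ φ : ℂ) = 1 := by
    rw [inner_self_eq_norm_sq_to_K, hφ]; norm_num
  have hinnerψ : ∀ i, (inner ℂ (ψ i) (ψ i) : ℂ) = 1 := fun i => by
    rw [inner_self_eq_norm_sq_to_K, hψ i]; norm_num
  -- trace bound : ∑ lam ≤ 1 + t
  have htraceA : A.trace = ((∑ i, lam i : ℝ) : ℂ) - 1 := by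
    rw [hAdef, Matrix.trace_sub, Matrix.trace_sum, aux_trace_proj, hinner1]
    congr 1
    push_cast
    refine Finset.sum_congr rfl (fun i _ => ?_)
    rw [Matrix.trace_smul, aux_trace_proj, hinnerψ i, smul_eq_mul, mul_one]
  have htr2 : (∑ i, lam i) - 1 = ∑ i, μ i := by
    have := (aux_trace_herm hA).symm.trans htraceA
    have h2 := congrArg Complex.re this
    simpa using h2.symm
  have hlam_le : ∑ i, lam i ≤ 1 + t := by
    have h1 : ∑ i, μ i ≤ ∑ i, |μ i| := Finset.sum_le_sum (fun i _ => le_abs_self _)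
    linarith
  -- quadratic form bound : 1 - t ≤ ∑ lam i * w i
  set w : Fin I → ℝ := fun i => ‖(inner ℂ φ (ψ i) : ℂ)‖ ^ 2 with hw
  have hφdot : star (fun i => φ i) ⬝ᵥ (fun i => φ i) = 1 := by
    rw [← aux_inner_dot, hinner1]
  have hone : ((‖(inner ℂ φ φ : ℂ)‖ ^ 2 : ℝ) : ℂ) = 1 := by
    rw [hinner1]; norm_num
  have hquadA : star (fun i => φ i) ⬝ᵥ (A *ᵥ (fun i => φ i))
      = ((∑ i, lam i * w i : ℝ) : ℂ) - 1 := by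
    rw [hAdef, Matrix.sub_mulVec, dotProduct_sub, aux_quad_proj φ φ, hone]
    congr 1
    rw [aux_sum_mulVec, aux_dot_sum]
    push_cast
    refine Finset.sum_congr rfl (fun i _ => ?_)
    rw [Matrix.smul_mulVec, dotProduct_smul, aux_quad_proj (ψ i) φ,
      smul_eq_mul]
  obtain ⟨n, hn0, hn1, hnq⟩ := aux_quad_eq hA (fun i => φ i) hφdot
  have hquadre : (star (fun i => φ i) ⬝ᵥ (A *ᵥ (fun i => φ i))).re
      = (∑ i, lam i * w i) - 1 := by
    rw [hquadA]; simp
  have hnle1 : ∀ i, n i ≤ 1 := by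
    intro i
    rw [← hn1]
    exact Finset.single_le_sum (fun j _ => hn0 j) (Finset.mem_univ i)
  have hlow : -(∑ i, |μ i|) ≤ ∑ i, μ i * n i := by
    rw [← Finset.sum_neg_distrib]
    refine Finset.sum_le_sum (fun i _ => ?_)
    nlinarith [neg_abs_le (μ i), abs_nonneg (μ i), hn0 i, hnle1 i]
  have key1 : 1 - t ≤ ∑ i, lam i * w i := by
    have := hnq ▸ hquadre
    linarith [hlow, hS, this.ge, this.le]
  have hw0 : ∀ i, 0 ≤ w i := fun i => sq_nonneg _
  have hex : ∃ i₀, 1 - 2 * t ≤ w i₀ := by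
    by_contra hcon
    push_neg at hcon
    by_cases hz : ∀ i, lam i = 0
    · have hzero : ∑ i, lam i * w i = 0 := by
        refine Finset.sum_eq_zero (fun i _ => ?_)
        rw [hz i, zero_mul]
      rw [hzero] at key1
      linarith
    · push_neg at hz
      obtain ⟨j, hj⟩ := hz
      have hjpos : 0 < lam j := lt_of_le_of_ne (h0 j) (Ne.symm hj)
      have hstrict : ∑ i, lam i * w i < ∑ i, lam i * (1 - 2 * t) := by
        refine Finset.sum_lt_sum (fun i _ => ?_) ⟨j, Finset.mem_univ j, ?_⟩
        · exact mul_le_mul_of_nonneg_left (le_of_lt (hcon i)) (h0 i)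
        · exact (mul_lt_mul_iff_right₀ hjpos).mpr (hcon j)
      rw [← Finset.sum_mul] at hstrict
      have h12t : 0 ≤ 1 - 2 * t := by linarith
      have hlam0 : 0 ≤ ∑ i, lam i := Finset.sum_nonneg (fun i _ => h0 i)
      nlinarith [hstrict, hlam_le, key1, sq_nonneg t]
  obtain ⟨i₀, hi₀⟩ := hex
  refine ⟨i₀, ?_, ?_⟩
  all_goals have hwi : w i₀ = ‖(inner ℂ φ (ψ i₀) : ℂ)‖ ^ 2 := rfl
  · linarith [hi₀, ht, hwi]
  · apply Real.sqrt_le_sqrt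
    linarith [hi₀, ht, hwi]
end
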